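/- arXiv:1706.01195 — 2 statements merged into one kernel-verified Lean document; each statement's English description precedes it below -/
import Mathlib

section
/- Let A ∈ ℝ^{n×n}, B ∈ ℝ^{n×m}, let D ⊆ ℝ^n be a convex disturbance set, let U ⊆ ℝ^m be the admissible control set, let α ∈ [0,1), let κ ≥ 1 be an integer, and let M₀, …, M_{κ-1} ∈ ℝ^{m×n}. For i = 0, …, κ define the matrix P_i := A^i + Σ_{j=0}^{i-1} A^{i-1-j} B M_j (so P_0 = I). Let x̄ ∈ ℝ^n and ū ∈ ℝ^m satisfy A x̄ + B ū = x̄. Assume: (a) P_κ d ∈ α·D for every d ∈ D (i.e., P_κ D ⊆ αD), and (b) for every d₀, …, d_{κ-1} ∈ D, the control ū + (1-α)^{-1} Σ_{i=0}^{κ-1} M_i d_i belongs to U. Then the set Ω := { x̄ + (1-α)^{-1} Σ_{i=0}^{κ-1} P_i d_i : d₀, …, d_{κ-1} ∈ D } is robust control invariant for the system y⁺ = A y + B u + w with disturbance set D and control set U; specifically, for every y ∈ Ω there exists u ∈ U such that A y + B u + d ∈ Ω for all d ∈ D. -/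
open Finset Pointwise in
/-- Raković et al. RCI parametrization: under conditions
(a) `P_κ D ⊆ α D` and (b) admissibility of the parametrized controls, the set
`Ω = x̄ ⊕ (1-α)⁻¹ ⊕_{i<κ} P_i D` is robust control invariant for
`y⁺ = A y + B u + w` with disturbance set `D` and control set `U`. -/
theorem stmt_6 {n m : ℕ}
    (A : Matrix (Fin n) (Fin n) ℝ) (B : Matrix (Fin n) (Fin m) ℝ)
    (D : Set (Fin n → ℝ)) (hD : Convex ℝ D)
    (U : Set (Fin m → ℝ))
    (α : ℝ) (hα0 : 0 ≤ α) (hα1 : α < 1)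
    (κ : ℕ) (hκ : 1 ≤ κ)
    (M : ℕ → Matrix (Fin m) (Fin n) ℝ)
    (P : ℕ → Matrix (Fin n) (Fin n) ℝ)
    (hP : ∀ i, P i = A ^ i + ∑ j ∈ Finset.range i, A ^ (i - 1 - j) * B * M j)
    (xbar : Fin n → ℝ) (ubar : Fin m → ℝ)
    (hfix : A.mulVec xbar + B.mulVec ubar = xbar)
    (ha : ∀ d ∈ D, (P κ).mulVec d ∈ α • D)
    (hb : ∀ d : ℕ → (Fin n → ℝ), (∀ i < κ, d i ∈ D) →
      ubar + (1 - α)⁻¹ • ∑ i ∈ Finset.range κ, (M i).mulVec (d i) ∈ U)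
    (Ω : Set (Fin n → ℝ))
    (hΩ : Ω = {y | ∃ d : ℕ → (Fin n → ℝ), (∀ i < κ, d i ∈ D) ∧
      y = xbar + (1 - α)⁻¹ • ∑ i ∈ Finset.range κ, (P i).mulVec (d i)}) :
    ∀ y ∈ Ω, ∃ u ∈ U, ∀ d ∈ D, A.mulVec y + B.mulVec u + d ∈ Ω := by
  have hkey : ∀ i, A * P i + B * M i = P (i + 1) := by
    intro i
    rw [hP i, hP (i + 1), Finset.sum_range_succ]
    have h1 : ∀ j ∈ Finset.range i, A ^ (i + 1 - 1 - j) * B * M j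
        = A * (A ^ (i - 1 - j) * B * M j) := by
      intro j hj
      rw [Finset.mem_range] at hj
      have : i + 1 - 1 - j = (i - 1 - j) + 1 := by omega
      rw [this, pow_succ']
      simp only [Matrix.mul_assoc]
    rw [Finset.sum_congr rfl h1]
    have : i + 1 - 1 - i = 0 := by omega
    rw [this, pow_zero, pow_succ', mul_add, Finset.mul_sum]
    rw [Matrix.one_mul]
    abel
  obtain ⟨k, rfl⟩ : ∃ k, κ = k + 1 := ⟨κ - 1, by omega⟩
  intro y hy
  rw [hΩ] at hy
  obtain ⟨d, hd, rfl⟩ := hy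
  refine ⟨ubar + (1 - α)⁻¹ • ∑ i ∈ Finset.range (k + 1), (M i).mulVec (d i),
    hb d hd, ?_⟩
  intro w hw
  obtain ⟨e, he, hPe⟩ := ha (d k) (hd k (by omega))
  rw [hΩ]
  refine ⟨fun i => if i = 0 then (1 - α) • w + α • e else d (i - 1), ?_, ?_⟩
  · intro i hi
    by_cases h : i = 0
    · simp only [h, if_pos rfl]
      exact hD hw he (by linarith) hα0 (by ring)
    · simp only [if_neg h]
      exact hd (i - 1) (by omega)
  · have h1α : (1 - α) ≠ 0 := by linarith
    have hvec : ∀ (v : Fin n → ℝ) (i : ℕ),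
        A.mulVec ((P i).mulVec v) + B.mulVec ((M i).mulVec v)
          = (P (i + 1)).mulVec v := by
      intro v i
      rw [Matrix.mulVec_mulVec, Matrix.mulVec_mulVec, ← Matrix.add_mulVec, hkey]
    have hAsum : A.mulVec (∑ i ∈ Finset.range (k + 1), (P i).mulVec (d i))
        = ∑ i ∈ Finset.range (k + 1), A.mulVec ((P i).mulVec (d i)) := by
      rw [← Matrix.mulVecLin_apply, map_sum]
      simp [Matrix.mulVecLin_apply]
    have hBsum : B.mulVec (∑ i ∈ Finset.range (k + 1), (M i).mulVec (d i))
        = ∑ i ∈ Finset.range (k + 1), B.mulVec ((M i).mulVec (d i)) := by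
      rw [← Matrix.mulVecLin_apply, map_sum]
      simp [Matrix.mulVecLin_apply]
    have hP0 : P 0 = 1 := by simp [hP 0]
    -- compute the new-disturbance sum
    have hRHSsum : (∑ i ∈ Finset.range (k + 1), (P i).mulVec
          ((fun i => if i = 0 then (1 - α) • w + α • e else d (i - 1)) i))
        = ((1 - α) • w + α • e) + ∑ i ∈ Finset.range k, (P (i + 1)).mulVec (d i) := by
      rw [Finset.sum_range_succ']
      simp [hP0, Matrix.one_mulVec, Nat.add_sub_cancel]
      abel
    -- compute the propagated sum
    have hLHSsum : (∑ i ∈ Finset.range (k + 1), (P (i + 1)).mulVec (d i))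
        = (∑ i ∈ Finset.range k, (P (i + 1)).mulVec (d i)) + α • e := by
      rw [Finset.sum_range_succ, ← hPe]
    calc A.mulVec (xbar + (1 - α)⁻¹ • ∑ i ∈ Finset.range (k + 1), (P i).mulVec (d i))
          + B.mulVec (ubar + (1 - α)⁻¹ • ∑ i ∈ Finset.range (k + 1), (M i).mulVec (d i)) + w
        = (A.mulVec xbar + B.mulVec ubar)
          + (1 - α)⁻¹ • (∑ i ∈ Finset.range (k + 1),
              (A.mulVec ((P i).mulVec (d i)) + B.mulVec ((M i).mulVec (d i)))) + w := by
          rw [Matrix.mulVec_add, Matrix.mulVec_add, Matrix.mulVec_smul,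
            Matrix.mulVec_smul, hAsum, hBsum, Finset.sum_add_distrib, smul_add]
          abel
      _ = xbar + (1 - α)⁻¹ • (∑ i ∈ Finset.range (k + 1), (P (i + 1)).mulVec (d i)) + w := by
          rw [hfix]
          congr 2
          exact congrArg _ (Finset.sum_congr rfl fun i _ => hvec (d i) i)
      _ = xbar + (1 - α)⁻¹ • ((∑ i ∈ Finset.range k, (P (i + 1)).mulVec (d i)) + α • e) + w := by
          rw [hLHSsum]
      _ = xbar + (1 - α)⁻¹ • (((1 - α) • w + α • e)
            + ∑ i ∈ Finset.range k, (P (i + 1)).mulVec (d i)) := by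
          rw [smul_add, smul_add, smul_add, inv_smul_smul₀ h1α]
          abel
      _ = xbar + (1 - α)⁻¹ • ∑ i ∈ Finset.range (k + 1), (P i).mulVec
            ((fun i => if i = 0 then (1 - α) • w + α • e else d (i - 1)) i) := by
          rw [hRHSsum]
end

section
/- Consider a platoon of N+1 vehicles (N ≥ 1) of common length l > 0 with sampling time Δτ > 0, actual control sets [u_{i,min}, u_{i,max}] for each i ∈ {0,…,N}, actual disturbance rectangles [w_{i,x,min}, w_{i,x,max}] × [w_{i,v,min}, w_{i,v,max}], envelope sets 𝕊_i = { (x̃, ṽ) ∈ ℝ² : i·l + (i-1)(L-Nl)/N ≤ x̃ ≤ i·l + i(L-Nl)/N } for i ∈ {1,…,N}, and 𝕊₀ = [v_{0,min}, v_{0,max}]. Suppose: (i) for each i ∈ {1,…,N} there is a set Ω_i ⊆ 𝕊_i and a policy μ_i : Ω_i → Ũ_i (with Ũ_i ⊆ ℝ an interval of relative controls) such that for all (x̃_i, ṽ_i) ∈ Ω_i and all (w̃_x, w̃_v) in the relative disturbance rectangle W̃_i, the successor (x̃_i + ṽ_i Δτ + μ_i(x̃_i, ṽ_i) Δτ²/2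 + w̃_x, ṽ_i + μ_i(x̃_i, ṽ_i) Δτ + w̃_v) lies in Ω_i; (ii) there is Ω₀ ⊆ 𝕊₀ and μ₀ : Ω₀ → U₀ ⊆ [u_{0,min}, u_{0,max}] such that v₀ + μ₀(v₀) Δτ + w ∈ Ω₀ for all v₀ ∈ Ω₀ and w ∈ [w_{0,v,min}, w_{0,v,max}]; (iii) for every u₀ ∈ U₀ and every ũ_i ∈ Ũ_i, the actual input u_i = u₀ - ũ_i lies in [u_{i,min}, u_{i,max}]; (iv) for every admissible actual disturbances w₀ = (w_{0,x}, w_{0,v}) and w_i = (w_{i,x}, w_{i,v}) of the leader and vehicle i, the relative disturbance (w_{0,x} - w_{i,x}, w_{0,v} - w_{i,v}) lies in W̃_i. Then for every initial platoon state with (x̃_i(0), ṽ_i(0)) ∈ Ω_i for all i ∈ {1,…,N} and v₀(0) ∈ Ω₀, and every sequence of admissible actual disturbances, the closed loop under the distributed policy (u₀(k) = μ₀(v₀(k)), u_i(k) = u₀(k) - μ_i(x̃_i(k), ṽ_i(k))) applied to the relative dynamics x̃_i⁺ = x̃_i + ṽ_i Δτ + (u₀-u_i) Δτ²/2 + w_{0,x}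 - w_{i,x}, ṽ_i⁺ = ṽ_i + (u₀-u_i) Δτ + w_{0,v} - w_{i,v}, v₀⁺ = v₀ + u₀ Δτ + w_{0,v} satisfies, for all times k: all inputs u_i(k) ∈ [u_{i,min}, u_{i,max}]; the spacings x̃_i(k) - x̃_{i-1}(k) ≥ l (with x̃₀ = 0); the platoon length x̃_N(k) ≤ L; and the platoon velocity v₀(k) ∈ [v_{0,min}, v_{0,max}]. -/
/-- Correctness of the distributed platoon control policy.
Given per-vehicle robust control invariant sets inside the position envelopes
(for the followers, in leader-relative coordinates) and a speed-range-invariant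
set for the leader, with under-approximated relative controls (iii) and
over-approximated relative disturbances (iv), the closed loop under the
distributed policy `u₀ = μ₀(v₀)`, `u_i = u₀ - μ_i(x̃_i, ṽ_i)` satisfies for all
times the input bounds, the inter-vehicle spacings `x̃_i - x̃_{i-1} ≥ l`, the
platoon-length bound `x̃_N ≤ L`, and the platoon-velocity range. -/
theorem stmt_10
    (N : ℕ) (hN : 1 ≤ N) (l : ℝ) (hl : 0 < l) (Δτ : ℝ) (hΔτ : 0 < Δτ) (L : ℝ)
    (umin umax wxmin wxmax wvmin wvmax : ℕ → ℝ)
    (v0min v0max : ℝ)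
    -- invariant sets and policies
    (Ω : ℕ → Set (ℝ × ℝ)) (μ : ℕ → ℝ × ℝ → ℝ)
    (Ut : ℕ → Set ℝ)      -- relative control sets Ũ_i
    (Wt : ℕ → Set (ℝ × ℝ)) -- relative disturbance rectangles W̃_i
    (Ω₀ : Set ℝ) (μ₀ : ℝ → ℝ) (U₀ : Set ℝ)
    -- (i) follower invariance within the envelopes
    (henv : ∀ i, 1 ≤ i → i ≤ N → Ω i ⊆
      {s : ℝ × ℝ | (i : ℝ) * l + ((i : ℝ) - 1) * (L - N * l) / N ≤ s.1 ∧
        s.1 ≤ (i : ℝ) * l + (i : ℝ) * (L - N * l) / N})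
    (hμU : ∀ i, 1 ≤ i → i ≤ N → ∀ s ∈ Ω i, μ i s ∈ Ut i)
    (hinv : ∀ i, 1 ≤ i → i ≤ N → ∀ s ∈ Ω i, ∀ wt ∈ Wt i,
      (s.1 + s.2 * Δτ + μ i s * Δτ ^ 2 / 2 + wt.1,
       s.2 + μ i s * Δτ + wt.2) ∈ Ω i)
    -- (ii) leader invariance within the speed range
    (hΩ₀S : Ω₀ ⊆ Set.Icc v0min v0max)
    (hU₀ : U₀ ⊆ Set.Icc (umin 0) (umax 0))
    (hμ₀U : ∀ v ∈ Ω₀, μ₀ v ∈ U₀)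
    (hinv₀ : ∀ v ∈ Ω₀, ∀ w ∈ Set.Icc (wvmin 0) (wvmax 0),
      v + μ₀ v * Δτ + w ∈ Ω₀)
    -- (iii) actual inputs of the followers are admissible
    (hctr : ∀ u₀ ∈ U₀, ∀ i, 1 ≤ i → i ≤ N → ∀ ut ∈ Ut i,
      u₀ - ut ∈ Set.Icc (umin i) (umax i))
    -- (iv) relative disturbances lie in W̃_i
    (hdist : ∀ i, 1 ≤ i → i ≤ N →
      ∀ w0x ∈ Set.Icc (wxmin 0) (wxmax 0), ∀ w0v ∈ Set.Icc (wvmin 0) (wvmax 0),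
      ∀ wix ∈ Set.Icc (wxmin i) (wxmax i), ∀ wiv ∈ Set.Icc (wvmin i) (wvmax i),
      (w0x - wix, w0v - wiv) ∈ Wt i)
    -- closed-loop trajectories
    (xt vt : ℕ → ℕ → ℝ) (v₀ : ℕ → ℝ) (u : ℕ → ℕ → ℝ) (wx wv : ℕ → ℕ → ℝ)
    (hx0 : ∀ k, xt k 0 = 0)
    -- admissible actual disturbances
    (hwx : ∀ k, ∀ i ≤ N, wx k i ∈ Set.Icc (wxmin i) (wxmax i))
    (hwv : ∀ k, ∀ i ≤ N, wv k i ∈ Set.Icc (wvmin i) (wvmax i))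
    -- the distributed policy
    (hu0 : ∀ k, u k 0 = μ₀ (v₀ k))
    (hui : ∀ k, ∀ i, 1 ≤ i → i ≤ N → u k i = u k 0 - μ i (xt k i, vt k i))
    -- relative dynamics
    (hdynx : ∀ k, ∀ i, 1 ≤ i → i ≤ N → xt (k + 1) i =
      xt k i + vt k i * Δτ + (u k 0 - u k i) * Δτ ^ 2 / 2 + wx k 0 - wx k i)
    (hdynv : ∀ k, ∀ i, 1 ≤ i → i ≤ N → vt (k + 1) i =
      vt k i + (u k 0 - u k i) * Δτ + wv k 0 - wv k i)
    (hdyn0 : ∀ k, v₀ (k + 1) = v₀ k + u k 0 * Δτ + wv k 0)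
    -- initial conditions
    (hinit : ∀ i, 1 ≤ i → i ≤ N → (xt 0 i, vt 0 i) ∈ Ω i)
    (hinit0 : v₀ 0 ∈ Ω₀) :
    ∀ k, (∀ i ≤ N, u k i ∈ Set.Icc (umin i) (umax i)) ∧
      (∀ i, 1 ≤ i → i ≤ N → xt k i - xt k (i - 1) ≥ l) ∧
      xt k N ≤ L ∧ v₀ k ∈ Set.Icc v0min v0max := by
  -- main invariant
  have key : ∀ k, v₀ k ∈ Ω₀ ∧ ∀ i, 1 ≤ i → i ≤ N → (xt k i, vt k i) ∈ Ω i := by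
    intro k
    induction k with
    | zero => exact ⟨hinit0, hinit⟩
    | succ k ih =>
      obtain ⟨h0, hi⟩ := ih
      constructor
      · rw [hdyn0, hu0]
        exact hinv₀ _ h0 _ (hwv k 0 (Nat.zero_le N))
      · intro i h1 h2
        have hs := hi i h1 h2
        have hwt : (wx k 0 - wx k i, wv k 0 - wv k i) ∈ Wt i :=
          hdist i h1 h2 _ (hwx k 0 (Nat.zero_le N)) _ (hwv k 0 (Nat.zero_le N))
            _ (hwx k i h2) _ (hwv k i h2)
        have := hinv i h1 h2 _ hs _ hwt
        have hux : u k 0 - u k i = μ i (xt k i, vt k i) := by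
          rw [hui k i h1 h2]; ring
        rw [hdynx k i h1 h2, hdynv k i h1 h2, hux]
        convert this using 2 <;> ring
  intro k
  obtain ⟨h0, hi⟩ := key k
  have hNpos : (0:ℝ) < N := by positivity
  have henvi : ∀ i, 1 ≤ i → i ≤ N →
      (i : ℝ) * l + ((i : ℝ) - 1) * (L - N * l) / N ≤ xt k i ∧
        xt k i ≤ (i : ℝ) * l + (i : ℝ) * (L - N * l) / N := by
    intro i h1 h2
    exact henv i h1 h2 (hi i h1 h2)
  refine ⟨?_, ?_, ?_, hΩ₀S h0⟩
  · intro i hiN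
    rcases Nat.eq_zero_or_pos i with rfl | hpos
    · rw [hu0]
      exact hU₀ (hμ₀U _ h0)
    · rw [hui k i hpos hiN]
      exact hctr _ (by rw [hu0]; exact hμ₀U _ h0) i hpos hiN _
        (hμU i hpos hiN _ (hi i hpos hiN))
  · intro i h1 h2
    rcases Nat.lt_or_ge i 2 with hlt | hge
    · interval_cases i
      rw [hx0]
      have := (henvi 1 le_rfl h2).1
      simp at this
      linarith
    · have h1' : 1 ≤ i - 1 := by omega
      have h2' : i - 1 ≤ N := by omega
      have hlow := (henvi i h1 h2).1
      have hup := (henvi (i-1) h1' h2').2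
      have hc : ((i - 1 : ℕ) : ℝ) = (i : ℝ) - 1 := by
        have : 1 ≤ i := h1
        push_cast [Nat.cast_sub this]; ring
      rw [hc] at hup
      linarith
  · have hup := (henvi N hN le_rfl).2
    have : (N:ℝ) * l + (N:ℝ) * (L - N * l) / N = L := by
      field_simp
      ring
    linarith
end
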